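/- arXiv:1501.00213 — 2 statements merged into one kernel-verified Lean document; each statement's English description precedes it below -/
import Mathlib

section
/- Suppose three differentiable nonnegative functions $\mathcal{G},\mathcal{H},\mathcal{K}:[0,\Omega]\to\mathbb{R}$ and two nonnegative functions $P,Q:[0,\Omega]\to\mathbb{R}$ satisfy, for every $\epsilon>0$, with some constant $C=C(\epsilon)\ge 0$: $\dot{\mathcal{G}}\le C(\mathcal{G}+\mathcal{H})+2\epsilon P$, $\dot{\mathcal{H}}\le C(\mathcal{G}+\mathcal{H})-2(1-\epsilon)P-4\alpha Q$, and $\dot{\mathcal{K}}\le C(\mathcal{G}+\mathcal{H})+2\epsilon P-2(1+2\alpha(n-1))Q$, where $\alpha+1/(2(n-1))>0$ and $n\ge 2$. If $\mathcal{G}(0)=\mathcal{H}(0)=\mathcal{K}(0)=0$, then $\mathcal{G}\equiv\mathcal{H}\equiv 0$ on $[0,\Omega]$. -/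
/-- From the system of differential inequalities of Theorem 2.2, vanishing
initial data forces `𝒢 ≡ ℋ ≡ 0` on `[0, Ω]`. -/
theorem stmt2 (Ω : ℝ) (hΩ : 0 ≤ Ω) (n : ℕ) (hn : 2 ≤ n) (α : ℝ)
    (hα : α + 1 / (2 * ((n : ℝ) - 1)) > 0)
    (G H K P Q G' H' K' : ℝ → ℝ)
    (hGd : ∀ t ∈ Set.Icc (0 : ℝ) Ω, HasDerivAt G (G' t) t)
    (hHd : ∀ t ∈ Set.Icc (0 : ℝ) Ω, HasDerivAt H (H' t) t)
    (hKd : ∀ t ∈ Set.Icc (0 : ℝ) Ω, HasDerivAt K (K' t) t)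
    (hGpos : ∀ t ∈ Set.Icc (0 : ℝ) Ω, 0 ≤ G t)
    (hHpos : ∀ t ∈ Set.Icc (0 : ℝ) Ω, 0 ≤ H t)
    (hKpos : ∀ t ∈ Set.Icc (0 : ℝ) Ω, 0 ≤ K t)
    (hPpos : ∀ t ∈ Set.Icc (0 : ℝ) Ω, 0 ≤ P t)
    (hQpos : ∀ t ∈ Set.Icc (0 : ℝ) Ω, 0 ≤ Q t)
    (hsys : ∀ ε : ℝ, 0 < ε → ∃ C : ℝ, 0 ≤ C ∧ ∀ t ∈ Set.Icc (0 : ℝ) Ω,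
      G' t ≤ C * (G t + H t) + 2 * ε * P t ∧
      H' t ≤ C * (G t + H t) - 2 * (1 - ε) * P t - 4 * α * Q t ∧
      K' t ≤ C * (G t + H t) + 2 * ε * P t
        - 2 * (1 + 2 * α * ((n : ℝ) - 1)) * Q t)
    (h0 : G 0 = 0 ∧ H 0 = 0 ∧ K 0 = 0) :
    ∀ t ∈ Set.Icc (0 : ℝ) Ω, G t = 0 ∧ H t = 0 := by
  have hn1 : (1:ℝ) ≤ (n:ℝ) - 1 := by
    have : (2:ℝ) ≤ (n:ℝ) := by exact_mod_cast hn
    linarith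
  have hn1' : (0:ℝ) < 2 * ((n:ℝ) - 1) := by linarith
  -- β := 1 + 2α(n-1) > 0
  have hβ : 0 < 1 + 2 * α * ((n:ℝ) - 1) := by
    have h1 := mul_pos hn1' hα
    have h2 : 2 * ((n:ℝ) - 1) * (α + 1 / (2 * ((n:ℝ) - 1)))
        = 1 + 2 * α * ((n:ℝ) - 1) := by
      field_simp
      ring
    linarith [h2 ▸ h1]
  set β : ℝ := 1 + 2 * α * ((n:ℝ) - 1) with hβdef
  set r : ℝ := (1 + 2 * |α|) / β with hrdef
  have hr : 0 < r := div_pos (by positivity) hβ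
  have hrβ : r * β = 1 + 2 * |α| := by
    rw [hrdef]; field_simp
  set ε : ℝ := 1 / (2 * (2 + r)) with hεdef
  have h2r : (0:ℝ) < 2 + r := by linarith
  have hε : 0 < ε := by positivity
  have hεval : ε * (2 + r) = 1 / 2 := by
    rw [hεdef]; field_simp
  obtain ⟨C, hC, hsys'⟩ := hsys ε hε
  set L : ℝ := (2 + r) * C with hLdef
  have hL : 0 ≤ L := mul_nonneg h2r.le hC
  set E : ℝ → ℝ := fun t => G t + H t + r * K t with hEdef
  set E' : ℝ → ℝ := fun t => G' t + H' t + r * K' t with hE'def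
  have hEd : ∀ t ∈ Set.Icc (0:ℝ) Ω, HasDerivAt E (E' t) t := fun t ht =>
    ((hGd t ht).add (hHd t ht)).add ((hKd t ht).const_mul r)
  have key : ∀ t ∈ Set.Icc (0:ℝ) Ω, E' t ≤ L * E t := by
    intro t ht
    obtain ⟨h1, h2, h3⟩ := hsys' t ht
    have hP := hPpos t ht
    have hQ := hQpos t ht
    have hK := hKpos t ht
    have h3' := mul_le_mul_of_nonneg_left h3 hr.le
    have step1 : E' t ≤ L * (G t + H t) + (2 * ε * (2 + r) - 2) * P t
        + (-4 * α - 2 * (r * β)) * Q t := by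
      have heq : L * (G t + H t) + (2 * ε * (2 + r) - 2) * P t
          + (-4 * α - 2 * (r * β)) * Q t
          = (C * (G t + H t) + 2 * ε * P t)
            + (C * (G t + H t) - 2 * (1 - ε) * P t - 4 * α * Q t)
            + r * (C * (G t + H t) + 2 * ε * P t - 2 * β * Q t) := by
        rw [hLdef, hβdef]; ring
      rw [hE'def, heq]
      dsimp only
      linarith
    have hPc : (2 * ε * (2 + r) - 2) * P t ≤ 0 := by
      have : 2 * ε * (2 + r) - 2 = -1 := by
        linear_combination 2 * hεval
      rw [this]; linarith
    have hQc : (-4 * α - 2 * (r * β)) * Q t ≤ 0 := by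
      apply mul_nonpos_of_nonpos_of_nonneg _ hQ
      rw [hrβ]
      have := neg_abs_le α
      linarith
    have hLE : L * (G t + H t) ≤ L * E t := by
      rw [hEdef]; dsimp only
      have := mul_le_mul_of_nonneg_left
        (by linarith [mul_nonneg hr.le hK] : G t + H t ≤ G t + H t + r * K t) hL
      linarith
    linarith
  -- Gronwall: F t = E t * exp (-L t) is antitone on [0, Ω]
  set F : ℝ → ℝ := fun t => E t * Real.exp (-L * t) with hFdef
  have hFd : ∀ t ∈ Set.Icc (0:ℝ) Ω,
      HasDerivAt F (E' t * Real.exp (-L * t) + E t * (Real.exp (-L * t) * -L)) t := by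
    intro t ht
    have hexp : HasDerivAt (fun s => Real.exp (-L * s)) (Real.exp (-L * t) * -L) t := by
      have : HasDerivAt (fun s : ℝ => -L * s) (-L) t := by
        simpa using (hasDerivAt_id t).const_mul (-L)
      simpa using this.exp
    exact (hEd t ht).mul hexp
  have hcont : ContinuousOn F (Set.Icc 0 Ω) := fun t ht =>
    (hFd t ht).continuousAt.continuousWithinAt
  have hanti : AntitoneOn F (Set.Icc 0 Ω) := by
    apply antitoneOn_of_deriv_nonpos (convex_Icc 0 Ω) hcont
    · intro t ht
      have ht' : t ∈ Set.Icc (0:ℝ) Ω := interior_subset ht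
      exact (hFd t ht').differentiableAt.differentiableWithinAt
    · intro t ht
      have ht' : t ∈ Set.Icc (0:ℝ) Ω := interior_subset ht
      rw [(hFd t ht').deriv]
      have hk := key t ht'
      have hexp : 0 < Real.exp (-L * t) := Real.exp_pos _
      nlinarith [mul_le_mul_of_nonneg_right hk hexp.le]
  intro t ht
  have h0mem : (0:ℝ) ∈ Set.Icc (0:ℝ) Ω := ⟨le_refl 0, hΩ⟩
  have hF0 : F 0 = 0 := by
    rw [hFdef]; dsimp only
    rw [hEdef]; dsimp only
    rw [h0.1, h0.2.1, h0.2.2]; ring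
  have hFt : F t ≤ 0 := by
    have := hanti h0mem ht ht.1
    rwa [hF0] at this
  have hexp : 0 < Real.exp (-L * t) := Real.exp_pos _
  have hEt : E t ≤ 0 := by
    by_contra h
    push_neg at h
    have : 0 < F t := by rw [hFdef]; exact mul_pos h hexp
    linarith
  have hG := hGpos t ht
  have hH := hHpos t ht
  have hK := mul_nonneg hr.le (hKpos t ht)
  rw [hEdef] at hEt; dsimp only at hEt
  constructor <;> linarith
end

section
/- Let $H$ be a real inner product space, $L:D\subseteq H\to H$ a linear map, and $X:[0,\Omega]\to D$ a differentiable path. Suppose there exist constants $\epsilon>0$, $C\ge 0$, and a seminorm $q$ on $D$ such that $\langle LX, X\rangle \le -\epsilon\, q(X)^2 + C\|X\|^2$ (Gårding inequality) and $\|\dot X - LX\| \le C(\|X\| + q(X))$ for all $t$. If $X(0)=0$, then $X\equiv 0$ on $[0,\Omega]$. -/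
open scoped RealInnerProductSpace

/-- Abstract skeleton of the general uniqueness theorem: a differentiable
curve `X` in a subspace `D` of a real inner product space satisfying a
Gårding inequality `⟪LX, X⟫ ≤ -ε q(X)² + C‖X‖²` and the perturbed evolution
bound `‖Ẋ - LX‖ ≤ C(‖X‖ + q(X))` vanishes identically if `X(0) = 0`. -/
theorem stmt16 {H : Type*} [NormedAddCommGroup H] [InnerProductSpace ℝ H]
    (D : Subspace ℝ H) (L : D →ₗ[ℝ] H) (q : Seminorm ℝ D)
    (Ω ε C : ℝ) (hΩ : 0 ≤ Ω) (hε : 0 < ε) (hC : 0 ≤ C)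
    (hGarding : ∀ x : D, ⟪L x, (x : H)⟫ ≤ -ε * q x ^ 2 + C * ‖x‖ ^ 2)
    (X X' : ℝ → D)
    (hX : ∀ t ∈ Set.Icc (0 : ℝ) Ω, HasDerivAt X (X' t) t)
    (hpert : ∀ t ∈ Set.Icc (0 : ℝ) Ω,
      ‖((X' t : H)) - L (X t)‖ ≤ C * (‖X t‖ + q (X t)))
    (h0 : X 0 = 0) :
    ∀ t ∈ Set.Icc (0 : ℝ) Ω, X t = 0 := by
  set K : ℝ := 4 * C + C ^ 2 / (2 * ε) with hK
  set f : ℝ → ℝ := fun t => ‖X t‖ ^ 2 with hf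
  set f' : ℝ → ℝ := fun t => 2 * ⟪(X' t : H), (X t : H)⟫ with hf'
  have hfd : ∀ t ∈ Set.Icc (0 : ℝ) Ω, HasDerivAt f (f' t) t := by
    intro t ht
    have h1 := (hX t ht).inner ℝ (hX t ht)
    have h2 : (fun s => (inner ℝ (X s) (X s) : ℝ)) = f := by
      funext s
      simp [hf, real_inner_self_eq_norm_sq]
    rw [h2] at h1
    refine h1.congr_deriv ?_
    have hc : (inner ℝ (X' t) (X t) : ℝ) = inner ℝ (X t) (X' t) := real_inner_comm _ _
    have hd : (⟪(X' t : H), (X t : H)⟫ : ℝ) = inner ℝ (X' t) (X t) := rfl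
    simp only [hf', hd]
    rw [hc]; ring
  have hbound : ∀ t ∈ Set.Icc (0 : ℝ) Ω, f' t ≤ K * f t + 0 := by
    intro t ht
    have h1 : ⟪(X' t : H), (X t : H)⟫
        = ⟪((X' t : H)) - L (X t), (X t : H)⟫ + ⟪L (X t), (X t : H)⟫ := by
      rw [← inner_add_left, sub_add_cancel]
    have h2 : ⟪((X' t : H)) - L (X t), (X t : H)⟫
        ≤ C * (‖X t‖ + q (X t)) * ‖X t‖ := by
      calc ⟪((X' t : H)) - L (X t), (X t : H)⟫
          ≤ ‖((X' t : H)) - L (X t)‖ * ‖(X t : H)‖ := real_inner_le_norm _ _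
        _ ≤ C * (‖X t‖ + q (X t)) * ‖(X t : H)‖ := by
            apply mul_le_mul_of_nonneg_right (hpert t ht) (norm_nonneg _)
    have h3 := hGarding (X t)
    have h2e : (0:ℝ) < 2 * ε := by positivity
    have hyoung : 2 * C * ‖X t‖ * q (X t)
        ≤ 2 * ε * q (X t) ^ 2 + C ^ 2 / (2 * ε) * ‖X t‖ ^ 2 := by
      rw [← mul_le_mul_iff_of_pos_right h2e]
      field_simp
      nlinarith [sq_nonneg (2 * ε * q (X t) - C * ‖X t‖)]
    have hq : 0 ≤ q (X t) := apply_nonneg q _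
    simp only [hf', hf, h1, hK]
    nlinarith [norm_nonneg (X t)]
  have hcont : ContinuousOn f (Set.Icc 0 Ω) :=
    fun t ht => ((hfd t ht).continuousAt.continuousWithinAt)
  have hf0 : f 0 ≤ 0 := by simp [hf, h0]
  have key : ∀ t ∈ Set.Icc (0 : ℝ) Ω, f t ≤ gronwallBound 0 K 0 (t - 0) := by
    apply le_gronwallBound_of_liminf_deriv_right_le hcont
    · intro x hx r hr
      exact ((hfd x (Set.mem_Icc_of_Ico hx)).hasDerivWithinAt).liminf_right_slope_le hr
    · exact hf0
    · intro x hx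
      exact hbound x (Set.mem_Icc_of_Ico hx)
  intro t ht
  have := key t ht
  rw [gronwallBound_ε0_δ0] at this
  have : ‖X t‖ ^ 2 ≤ 0 := this
  have h4 : ‖X t‖ = 0 := by nlinarith [norm_nonneg (X t)]
  exact norm_eq_zero.mp h4
end
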